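/- Let L̂ : BUC_η → ℝⁿ be bounded linear, λ ∈ ℂ with Re(λ) > -η and det Δ(λ) ≠ 0, where Δ(λ) = λI - L̂(e^{λ·}I). Then for every (α, φ) ∈ ℝⁿ × BUC_η, the function ψ(θ) = ∫_θ^0 e^{λ(θ-s)} φ(s) ds + e^{λθ} Δ(λ)^{-1} [α + φ(0) + L̂(θ ↦ ∫_θ^0 e^{λ(θ-s)}φ(s) ds)] belongs to BUC_η¹ and satisfies λψ - ψ' = φ and ψ'(0) = L̂(ψ) + α; i.e., (0,ψ) = (λI - (A+L))^{-1}(α,φ). -/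

import Mathlib

open Set Filter Topology

noncomputable def etaNorm (η : ℝ) {F : Type*} [NormedAddCommGroup F] (φ : ℝ → F) : ℝ :=
  sSup ((fun θ => Real.exp (η * θ) * ‖φ θ‖) '' Set.Iic 0)

def BUCmem (η : ℝ) {F : Type*} [NormedAddCommGroup F] [NormedSpace ℝ F] (φ : ℝ → F) : Prop :=
  ContinuousOn φ (Set.Iic 0) ∧
  BddAbove ((fun θ => Real.exp (η * θ) * ‖φ θ‖) '' Set.Iic 0) ∧
  UniformContinuousOn (fun θ => Real.exp (η * θ) • φ θ) (Set.Iic 0)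

def BUC1mem (η : ℝ) {F : Type*} [NormedAddCommGroup F] [NormedSpace ℝ F] (φ φ' : ℝ → F) : Prop :=
  BUCmem η φ ∧ BUCmem η φ' ∧ ∀ θ ≤ (0:ℝ), HasDerivWithinAt φ (φ' θ) (Set.Iic 0) θ

open Matrix

/-- The characteristic matrix `Δ(λ) = λI - L̂(e^{λ·}I)`. -/
noncomputable def charMatrix {n : ℕ} (Lhat : (ℝ → (Fin n → ℂ)) →ₗ[ℂ] (Fin n → ℂ))
    (z : ℂ) : Matrix (Fin n) (Fin n) ℂ :=
  Matrix.of fun i j =>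
    (if i = j then z else 0) -
      Lhat (fun θ => fun k => if k = j then Complex.exp (z * θ) else 0) i

/- auxiliary lemmas -/

lemma ucOn_congr {α β : Type*} [UniformSpace α] [UniformSpace β] {f g : α → β} {s : Set α}
    (hf : UniformContinuousOn f s) (h : ∀ x ∈ s, f x = g x) : UniformContinuousOn g s := by
  rw [uniformContinuousOn_iff_restrict] at hf ⊢
  have : s.domRestrict g = s.domRestrict f := funext fun x => (h x x.2).symm
  rw [this]; exact hf

lemma exp_integral_aux (r : ℝ) (hr : 0 < r) (θ : ℝ) :
    ∫ s in θ..(0:ℝ), Real.exp (-r * s) = (Real.exp (-r * θ) - 1) / r := by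
  have h : ∀ x ∈ uIcc θ (0:ℝ), HasDerivAt (fun s => Real.exp (-r * s) * (-(1/r)))
      (Real.exp (-r * x)) x := by
    intro x _
    have h1 : HasDerivAt (fun s : ℝ => -r * s) (-r) x := by
      simpa using (hasDerivAt_id x).const_mul (-r)
    have := (h1.exp).mul_const (-(1/r))
    have e : Real.exp (-r * x) * -r * -(1/r) = Real.exp (-r * x) := by
      rw [mul_assoc, show -r * -(1/r) = (1:ℝ) by field_simp, mul_one]
    rw [e] at this
    exact this
  rw [intervalIntegral.integral_eq_sub_of_hasDerivAt h
    ((Real.continuous_exp.comp (by fun_prop)).intervalIntegrable _ _)]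
  rw [mul_zero, Real.exp_zero]
  field_simp
  ring

lemma cexp_hasDerivAt (z : ℂ) (θ : ℝ) :
    HasDerivAt (fun θ : ℝ => Complex.exp (z * θ)) (z * Complex.exp (z * θ)) θ := by
  have h : HasDerivAt (fun θ : ℝ => z * (θ:ℂ)) z θ := by
    simpa using (Complex.ofRealCLM.hasDerivAt (x := θ)).const_mul z
  simpa [mul_comm] using h.cexp

/-- if `Re λ > -η` and `det Δ(λ) ≠ 0`, then for every `(α,φ) ∈ ℝⁿ × BUC_η`,
`ψ(θ) = ∫_θ^0 e^{λ(θ-s)}φ(s)ds + e^{λθ}Δ(λ)^{-1}[α + φ(0) + L̂(∫_·^0 e^{λ(·-s)}φ(s)ds)]`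
belongs to `BUC_η¹` and satisfies `λψ - ψ' = φ` on `(-∞,0]` and `ψ'(0) = L̂(ψ) + α`,
i.e. `(0,ψ) = (λI - (A+L))^{-1}(α,φ)`. -/
theorem resolvent_A_plus_L (η : ℝ) (hη : 0 < η) (n : ℕ)
    (Lhat : (ℝ → (Fin n → ℂ)) →ₗ[ℂ] (Fin n → ℂ))
    (hbd : ∃ C : ℝ, ∀ φ : ℝ → (Fin n → ℂ), BUCmem η φ → ‖Lhat φ‖ ≤ C * etaNorm η φ)
    (hsupp : ∀ φ ψ : ℝ → (Fin n → ℂ), (∀ θ ≤ (0:ℝ), φ θ = ψ θ) → Lhat φ = Lhat ψ)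
    (z : ℂ) (hz : -η < z.re) (hdet : (charMatrix Lhat z).det ≠ 0)
    (α : Fin n → ℂ) (φ : ℝ → (Fin n → ℂ)) (hφ : BUCmem η φ)
    (ψ : ℝ → (Fin n → ℂ))
    (hψ : ψ = fun θ : ℝ => (∫ s in θ..(0:ℝ), Complex.exp (z * (θ - s)) • φ s)
        + Complex.exp (z * θ) • ((charMatrix Lhat z)⁻¹ *ᵥ
            (α + φ 0 + Lhat (fun ϑ : ℝ => ∫ s in ϑ..(0:ℝ), Complex.exp (z * (ϑ - s)) • φ s)))) :
    ∃ ψ' : ℝ → (Fin n → ℂ), BUC1mem η ψ ψ' ∧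
      (∀ θ ≤ (0:ℝ), z • ψ θ - ψ' θ = φ θ) ∧ ψ' 0 = Lhat ψ + α := by
  obtain ⟨hφc, hφb, hφu⟩ := hφ
  obtain ⟨K, hK⟩ := hφb
  have hKφ : ∀ θ ≤ (0:ℝ), Real.exp (η * θ) * ‖φ θ‖ ≤ K := fun θ hθ => hK ⟨θ, hθ, rfl⟩
  have hK0 : 0 ≤ K := le_trans (by positivity) (hKφ 0 le_rfl)
  set r : ℝ := η + z.re with hr_def
  have hr : 0 < r := by simp only [hr_def]; linarith
  -- continuous extension of φ
  set φt : ℝ → Fin n → ℂ := fun θ => φ (min θ 0) with hφt_def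
  have hφt_cont : Continuous φt :=
    hφc.comp_continuous (continuous_id.min continuous_const) (fun x => mem_Iic.2 (min_le_right _ _))
  have hφt_eq : ∀ θ ≤ (0:ℝ), φt θ = φ θ := fun θ hθ => by
    simp [hφt_def, min_eq_left hθ]
  -- the kernel and its primitive
  set g : ℝ → Fin n → ℂ := fun s => Complex.exp (-(z * s)) • φt s with hg_def
  have hg_cont : Continuous g := by
    show Continuous fun s : ℝ => Complex.exp (-(z * (s:ℂ))) • φt s
    exact Continuous.smul (Complex.continuous_exp.comp (by fun_prop) :
      Continuous fun s : ℝ => Complex.exp (-(z * (s:ℂ)))) hφt_cont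
  set G : ℝ → Fin n → ℂ := fun θ => ∫ s in θ..(0:ℝ), g s with hG_def
  have hG' : ∀ θ, HasDerivAt G (-(g θ)) θ := fun θ =>
    (intervalIntegral.integral_hasStrictDerivAt_left (hg_cont.intervalIntegrable _ _)
      (hg_cont.stronglyMeasurableAtFilter _ _) hg_cont.continuousAt).hasDerivAt
  have hG_cont : Continuous G := continuous_iff_continuousAt.2 fun θ => (hG' θ).continuousAt
  -- the constant vector
  set Δ : Matrix (Fin n) (Fin n) ℂ := charMatrix Lhat z with hΔ_def
  set Ifun : ℝ → Fin n → ℂ :=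
    fun ϑ : ℝ => ∫ s in ϑ..(0:ℝ), Complex.exp (z * (ϑ - s)) • φ s with hIfun_def
  set c : Fin n → ℂ := Δ⁻¹ *ᵥ (α + φ 0 + Lhat Ifun) with hc_def
  have hψ2 : ∀ θ, ψ θ = Ifun θ + Complex.exp (z * θ) • c := fun θ => by rw [hψ]
  -- rewrite of the integral term
  have hI_eq : ∀ θ ≤ (0:ℝ), Ifun θ = Complex.exp (z * θ) • G θ := by
    intro θ hθ
    have h1 : Ifun θ = ∫ s in θ..(0:ℝ), Complex.exp (z * θ) • g s := by
      apply intervalIntegral.integral_congr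
      intro s hs
      rw [uIcc_of_le hθ] at hs
      have hs0 : s ≤ 0 := hs.2
      simp only [hg_def, hφt_eq s hs0, smul_smul, ← Complex.exp_add]
      congr 2
      ring
    rw [h1, intervalIntegral.integral_smul, hG_def]
  set ψt : ℝ → Fin n → ℂ := fun θ => Complex.exp (z * θ) • (G θ + c) with hψt_def
  have hψψt : ∀ θ ≤ (0:ℝ), ψ θ = ψt θ := by
    intro θ hθ
    rw [hψ2 θ, hI_eq θ hθ]
    show _ = Complex.exp (z * θ) • (G θ + c)
    rw [smul_add]
  have hψt_cont : Continuous ψt :=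
    ((Complex.continuous_exp.comp (by fun_prop)).smul (hG_cont.add continuous_const))
  -- the derivative of ψt
  have hcancel : ∀ θ : ℝ, Complex.exp (z * θ) * Complex.exp (-(z * θ)) = 1 := by
    intro θ; rw [← Complex.exp_add]; simp
  have hψt' : ∀ θ, HasDerivAt ψt (z • ψt θ - φt θ) θ := by
    intro θ
    have h := (cexp_hasDerivAt z θ).smul ((hG' θ).add_const c)
    have he : Complex.exp (z * θ) • (-(g θ)) + (z * Complex.exp (z * θ)) • (G θ + c)
        = z • ψt θ - φt θ := by
      have h1 : Complex.exp (z * θ) • (-(g θ)) = -(φt θ) := by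
        simp only [hg_def, smul_neg, smul_smul, hcancel θ, one_smul]
      rw [h1]
      show _ = z • (Complex.exp (z * θ) • (G θ + c)) - φt θ
      rw [← smul_smul]
      abel
    rw [← he]
    exact h
  -- bounds
  have hφtb : ∀ θ ≤ (0:ℝ), Real.exp (η * θ) * ‖φt θ‖ ≤ K := by
    intro θ hθ; rw [hφt_eq θ hθ]; exact hKφ θ hθ
  have hgb : ∀ s ≤ (0:ℝ), ‖g s‖ ≤ K * Real.exp (-r * s) := by
    intro s hs
    have h1 : ‖g s‖ = Real.exp (-(z.re * s)) * ‖φ s‖ := by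
      rw [hg_def]
      simp only [norm_smul, hφt_eq s hs]
      congr 1
      rw [Complex.norm_exp]
      congr 1
      simp [Complex.mul_re]
    have h2 : Real.exp (-(z.re * s)) = Real.exp (-r * s) * Real.exp (η * s) := by
      rw [← Real.exp_add]; congr 1; rw [hr_def]; ring
    rw [h1, h2, mul_assoc]
    calc Real.exp (-r*s) * (Real.exp (η*s) * ‖φ s‖) ≤ Real.exp (-r*s) * K :=
          mul_le_mul_of_nonneg_left (hKφ s hs) (Real.exp_pos _).le
      _ = K * Real.exp (-r*s) := mul_comm _ _
  have hGnorm : ∀ θ ≤ (0:ℝ), ‖G θ‖ ≤ K * Real.exp (-r * θ) / r := by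
    intro θ hθ
    have h1 : ‖G θ‖ ≤ ∫ s in θ..(0:ℝ), ‖g s‖ := by
      rw [hG_def]; exact intervalIntegral.norm_integral_le_integral_norm hθ
    have h2 : (∫ s in θ..(0:ℝ), ‖g s‖) ≤ ∫ s in θ..(0:ℝ), K * Real.exp (-r * s) := by
      apply intervalIntegral.integral_mono_on hθ (hg_cont.norm.intervalIntegrable _ _)
        ((continuous_const.mul (Real.continuous_exp.comp (by fun_prop))).intervalIntegrable _ _)
      intro s hs; exact hgb s hs.2
    have h3 : (∫ s in θ..(0:ℝ), K * Real.exp (-r * s)) = K * ((Real.exp (-r*θ) - 1)/r) := by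
      rw [intervalIntegral.integral_const_mul, exp_integral_aux r hr θ]
    have h4 : K * ((Real.exp (-r*θ) - 1)/r) ≤ K * Real.exp (-r*θ)/r := by
      rw [mul_div_assoc]
      gcongr
      linarith
    linarith
  have hGr : ∀ θ ≤ (0:ℝ), Real.exp (r * θ) * ‖G θ‖ ≤ K / r := by
    intro θ hθ
    have h1 := mul_le_mul_of_nonneg_left (hGnorm θ hθ) (Real.exp_pos (r*θ)).le
    have h2 : Real.exp (r*θ) * (K * Real.exp (-r*θ)/r) = K/r := by
      rw [show Real.exp (r*θ) * (K * Real.exp (-r*θ)/r)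
          = K * (Real.exp (r*θ) * Real.exp (-r*θ))/r by ring, ← Real.exp_add,
        show r*θ + -r*θ = 0 by ring, Real.exp_zero, mul_one]
    linarith
  have hψtb : ∀ θ ≤ (0:ℝ), Real.exp (η * θ) * ‖ψt θ‖ ≤ K / r + ‖c‖ := by
    intro θ hθ
    have h1 : ‖ψt θ‖ = Real.exp (z.re * θ) * ‖G θ + c‖ := by
      rw [hψt_def]
      simp only [norm_smul]
      congr 1
      rw [Complex.norm_exp]
      congr 1
      simp [Complex.mul_re]
    have h2 : Real.exp (η*θ) * Real.exp (z.re*θ) = Real.exp (r*θ) := by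
      rw [← Real.exp_add]; congr 1; rw [hr_def]; ring
    have h4 : Real.exp (r*θ) ≤ 1 := by rw [← Real.exp_zero]; exact Real.exp_le_exp.2 (by nlinarith)
    have h5 := hGr θ hθ
    have h6 : Real.exp (r*θ) * ‖c‖ ≤ ‖c‖ := by nlinarith [norm_nonneg c, Real.exp_pos (r*θ)]
    rw [h1, ← mul_assoc, h2]
    calc Real.exp (r*θ) * ‖G θ + c‖ ≤ Real.exp (r*θ) * (‖G θ‖ + ‖c‖) :=
          mul_le_mul_of_nonneg_left (norm_add_le _ _) (Real.exp_pos _).le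
      _ = Real.exp (r*θ)*‖G θ‖ + Real.exp (r*θ)*‖c‖ := by ring
      _ ≤ K/r + ‖c‖ := by linarith
  set B : ℝ := K/r + ‖c‖ with hB_def
  have hB0 : 0 ≤ B := by positivity
  -- BUCmem for ψ
  have hψcont : ContinuousOn ψ (Iic 0) :=
    (hψt_cont.continuousOn).congr (fun θ hθ => hψψt θ hθ)
  have hψbdd : BddAbove ((fun θ => Real.exp (η*θ) * ‖ψ θ‖) '' Iic 0) := by
    refine ⟨B, ?_⟩
    rintro x ⟨θ, hθ, rfl⟩
    simp only
    rw [hψψt θ hθ]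
    exact hψtb θ hθ
  -- uniform continuity of the weighted ψt via a Lipschitz bound
  have hexpR : ∀ θ : ℝ, HasDerivAt (fun θ => Real.exp (η*θ)) (η * Real.exp (η*θ)) θ := by
    intro θ
    have h1 : HasDerivAt (fun θ : ℝ => η * θ) η θ := by
      simpa using (hasDerivAt_id θ).const_mul η
    simpa [mul_comm] using h1.exp
  set ht' : ℝ → Fin n → ℂ :=
    fun θ => Real.exp (η*θ) • (z • ψt θ - φt θ) + (η * Real.exp (η*θ)) • ψt θ with hht'_def
  have hht : ∀ θ, HasDerivAt (fun θ => Real.exp (η*θ) • ψt θ) (ht' θ) θ := fun θ =>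
    (hexpR θ).smul (hψt' θ)
  set C : ℝ := ‖z‖ * B + K + η * B with hC_def
  have hbound : ∀ θ ∈ Iic (0:ℝ), ‖ht' θ‖ ≤ C := by
    intro θ hθ
    rw [mem_Iic] at hθ
    have hn1 : ‖(Real.exp (η*θ) : ℝ) • (z • ψt θ - φt θ)‖
        = Real.exp (η*θ) * ‖z • ψt θ - φt θ‖ := by
      rw [norm_smul, Real.norm_eq_abs, abs_of_pos (Real.exp_pos _)]
    have hn2 : ‖((η * Real.exp (η*θ)) : ℝ) • ψt θ‖ = (η * Real.exp (η*θ)) * ‖ψt θ‖ := by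
      rw [norm_smul, Real.norm_eq_abs, abs_of_pos (mul_pos hη (Real.exp_pos _))]
    have h2 : ‖z • ψt θ - φt θ‖ ≤ ‖z‖ * ‖ψt θ‖ + ‖φt θ‖ :=
      (norm_sub_le _ _).trans (by rw [norm_smul])
    calc ‖ht' θ‖ ≤ ‖(Real.exp (η*θ) : ℝ) • (z • ψt θ - φt θ)‖
          + ‖((η * Real.exp (η*θ)) : ℝ) • ψt θ‖ := norm_add_le _ _
      _ ≤ Real.exp (η*θ) * (‖z‖ * ‖ψt θ‖ + ‖φt θ‖) + (η * Real.exp (η*θ)) * ‖ψt θ‖ := by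
          rw [hn1, hn2]
          have := mul_le_mul_of_nonneg_left h2 (Real.exp_pos (η*θ)).le
          linarith
      _ = ‖z‖ * (Real.exp (η*θ) * ‖ψt θ‖) + Real.exp (η*θ) * ‖φt θ‖
          + η * (Real.exp (η*θ) * ‖ψt θ‖) := by ring
      _ ≤ ‖z‖ * B + K + η * B := by
          have hb1 := hψtb θ hθ
          have hb2 := hφtb θ hθ
          have hz0 : (0:ℝ) ≤ ‖z‖ := norm_nonneg z
          have hη0 : (0:ℝ) ≤ η := hη.le
          have := hB_def
          nlinarith [mul_le_mul_of_nonneg_left hb1 hz0, mul_le_mul_of_nonneg_left hb1 hη0]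
  have hUCht : UniformContinuousOn (fun θ => Real.exp (η*θ) • ψt θ) (Iic 0) := by
    apply LipschitzOnWith.uniformContinuousOn (K := Real.toNNReal C)
    apply LipschitzOnWith.of_dist_le_mul
    intro x hx y hy
    rw [dist_eq_norm, dist_eq_norm]
    have h := Convex.norm_image_sub_le_of_norm_hasDerivWithin_le
      (f' := ht') (fun θ _ => (hht θ).hasDerivWithinAt) hbound (convex_Iic 0) hy hx
    calc ‖Real.exp (η*x) • ψt x - Real.exp (η*y) • ψt y‖ ≤ C * ‖x - y‖ := h
      _ ≤ (Real.toNNReal C : ℝ) * ‖x - y‖ :=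
          mul_le_mul_of_nonneg_right (Real.le_coe_toNNReal C) (norm_nonneg _)
  have hψUC : UniformContinuousOn (fun θ => Real.exp (η*θ) • ψ θ) (Iic 0) :=
    ucOn_congr hUCht (fun θ hθ => by rw [hψψt θ hθ])
  have hBUCψ : BUCmem η ψ := ⟨hψcont, hψbdd, hψUC⟩
  -- BUCmem for ψ'
  have hBUCψ' : BUCmem η (fun θ => z • ψ θ - φ θ) := by
    refine ⟨(hψcont.const_smul z).sub hφc, ?_, ?_⟩
    · refine ⟨‖z‖ * B + K, ?_⟩
      rintro x ⟨θ, hθ, rfl⟩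
      simp only
      have h2 : ‖z • ψ θ - φ θ‖ ≤ ‖z‖ * ‖ψ θ‖ + ‖φ θ‖ :=
        (norm_sub_le _ _).trans (by rw [norm_smul])
      have hb1 : Real.exp (η*θ) * ‖ψ θ‖ ≤ B := by rw [hψψt θ hθ]; exact hψtb θ hθ
      have hb2 := hKφ θ hθ
      have hz0 : (0:ℝ) ≤ ‖z‖ := norm_nonneg z
      calc Real.exp (η*θ) * ‖z • ψ θ - φ θ‖
          ≤ Real.exp (η*θ) * (‖z‖ * ‖ψ θ‖ + ‖φ θ‖) :=
            mul_le_mul_of_nonneg_left h2 (Real.exp_pos _).le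
        _ = ‖z‖ * (Real.exp (η*θ) * ‖ψ θ‖) + Real.exp (η*θ) * ‖φ θ‖ := by ring
        _ ≤ ‖z‖ * B + K := by nlinarith [mul_le_mul_of_nonneg_left hb1 hz0]
    · refine ucOn_congr (f := fun θ => z • (Real.exp (η*θ) • ψ θ) - Real.exp (η*θ) • φ θ)
        ?_ (fun θ _ => ?_)
      · rw [uniformContinuousOn_iff_restrict] at hψUC hφu ⊢
        exact (hψUC.const_smul z).sub hφu
      · show z • (Real.exp (η*θ) • ψ θ) - Real.exp (η*θ) • φ θ
            = Real.exp (η*θ) • (z • ψ θ - φ θ)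
        rw [smul_sub]
        congr 1
        exact (smul_comm _ _ _)
  -- ψ' and the derivative statement
  refine ⟨fun θ => z • ψ θ - φ θ, ⟨hBUCψ, hBUCψ', ?_⟩, ?_, ?_⟩
  · intro θ hθ
    have h := ((hψt' θ).hasDerivWithinAt).congr (fun x hx => hψψt x hx) (hψψt θ hθ)
    show HasDerivWithinAt ψ (z • ψ θ - φ θ) (Iic 0) θ
    rw [hψψt θ hθ, ← hφt_eq θ hθ]
    exact h
  · intro θ _
    show z • ψ θ - (z • ψ θ - φ θ) = φ θ
    abel
  · show z • ψ 0 - φ 0 = Lhat ψ + α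
    have hψ0 : ψ 0 = c := by
      rw [hψ2 0]
      simp [hIfun_def, intervalIntegral.integral_same]
    set M : Matrix (Fin n) (Fin n) ℂ :=
      Matrix.of (fun i j => Lhat (fun θ (k : Fin n) =>
        if k = j then Complex.exp (z * θ) else 0) i) with hM_def
    have hE : Lhat (fun θ : ℝ => Complex.exp (z * θ) • c) = M *ᵥ c := by
      have h1 : (fun θ : ℝ => Complex.exp (z * θ) • c)
          = ∑ j : Fin n, c j • (fun (θ:ℝ) (k : Fin n) =>
              if k = j then Complex.exp (z * θ) else 0) := by
        funext θ k
        simp [Finset.sum_apply, Pi.smul_apply, smul_eq_mul, mul_ite, mul_zero, mul_comm]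
      rw [h1, map_sum]
      funext i
      simp [Matrix.mulVec, dotProduct, hM_def, mul_comm]
    have hΔv : Δ *ᵥ c = z • c - M *ᵥ c := by
      funext i
      simp [hΔ_def, charMatrix, Matrix.mulVec, dotProduct, sub_mul, ite_mul, zero_mul,
        Finset.sum_sub_distrib, hM_def]
    have hvc : Δ *ᵥ c = α + φ 0 + Lhat Ifun := by
      rw [hc_def, Matrix.mulVec_mulVec, Matrix.mul_nonsing_inv _ (isUnit_iff_ne_zero.2 hdet),
        Matrix.one_mulVec]
    have hsum : ψ = Ifun + (fun θ : ℝ => Complex.exp (z * θ) • c) := by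
      funext θ; rw [hψ2 θ]; rfl
    have h0 : z • c - M *ᵥ c = α + φ 0 + Lhat Ifun := by rw [← hΔv]; exact hvc
    have h' : z • c = α + φ 0 + Lhat Ifun + M *ᵥ c := sub_eq_iff_eq_add.mp h0
    rw [hψ0, hsum, map_add, hE, h']
    abel
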